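/- For a binomial random variable X with parameters n and k/n (where 1 ≤ k ≤ n), the limit as n → ∞ of E[min(X, k)] equals k·(1 - k^k/(e^k · k!)). -/

import Mathlib

open Filter Finset Topology

-- choose n t / n^t → 1/t!
lemma lemA1 (t : ℕ) : Tendsto (fun n : ℕ => (n.choose t : ℝ) / (n:ℝ)^t) atTop
    (𝓝 (1 / t.factorial)) := by
  have hfac : ∀ i : ℕ, Tendsto (fun n : ℕ => ((n:ℝ) - i) / n) atTop (𝓝 1) := by
    intro i
    have h : Tendsto (fun n : ℕ => 1 - (i:ℝ)/n) atTop (𝓝 1) := by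
      simpa using tendsto_const_nhds.sub (tendsto_const_div_atTop_nhds_zero_nat (i:ℝ))
    refine h.congr' ?_
    filter_upwards [eventually_ge_atTop 1] with n hn
    have hn0 : (n:ℝ) ≠ 0 := by positivity
    field_simp
  have hprod : Tendsto (fun n : ℕ => ∏ i ∈ range t, (((n:ℝ) - i) / n)) atTop (𝓝 1) := by
    have := tendsto_finset_prod (range t) (fun i _ => hfac i)
    simpa using this
  have h2 : Tendsto (fun n : ℕ => (1 / t.factorial : ℝ) * ∏ i ∈ range t, (((n:ℝ) - i) / n))
      atTop (𝓝 (1 / t.factorial)) := by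
    simpa using hprod.const_mul (1 / (t.factorial : ℝ))
  refine h2.congr' ?_
  filter_upwards [eventually_ge_atTop t] with n hn
  have hdesc : (n.descFactorial t : ℝ) = ∏ i ∈ range t, ((n:ℝ) - i) := by
    rw [Nat.descFactorial_eq_prod_range, Nat.cast_prod]
    refine Finset.prod_congr rfl fun i hi => ?_
    rw [Nat.cast_sub (le_trans (le_of_lt (mem_range.1 hi)) hn)]
  have hchoose : (n.choose t : ℝ) = (n.descFactorial t : ℝ) / t.factorial := by
    have h := Nat.descFactorial_eq_factorial_mul_choose n t
    have h2 : (n.descFactorial t : ℝ) = (t.factorial : ℝ) * n.choose t := by exact_mod_cast congrArg (Nat.cast : ℕ → ℝ) h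
    rw [h2]; field_simp
  rw [Finset.prod_div_distrib, Finset.prod_const, ← hdesc, hchoose, Finset.card_range]
  ring

lemma lemA2 (k t : ℕ) : Tendsto (fun n : ℕ => (1 - (k:ℝ)/n)^(n - t)) atTop
    (𝓝 (Real.exp (-(k:ℝ)))) := by
  have hbase : Tendsto (fun n : ℕ => 1 - (k:ℝ)/n) atTop (𝓝 1) := by
    simpa using tendsto_const_nhds.sub (tendsto_const_div_atTop_nhds_zero_nat (k:ℝ))
  have hpow : Tendsto (fun n : ℕ => (1 - (k:ℝ)/n)^n) atTop (𝓝 (Real.exp (-(k:ℝ)))) := by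
    have := Real.tendsto_one_add_div_pow_exp (-(k:ℝ))
    simpa [sub_eq_add_neg, neg_div] using this
  have hden : Tendsto (fun n : ℕ => (1 - (k:ℝ)/n)^t) atTop (𝓝 1) := by
    simpa using hbase.pow t
  have h := hpow.div hden one_ne_zero
  rw [div_one] at h
  refine h.congr' ?_
  filter_upwards [eventually_ge_atTop (k + t + 1)] with n hn
  have hn0 : (0:ℝ) < n := by exact_mod_cast Nat.lt_of_lt_of_le (Nat.succ_pos 0) (by omega)
  have hkn : (k:ℝ)/n < 1 := by
    rw [div_lt_one hn0]
    exact_mod_cast by omega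
  have hne : (1 - (k:ℝ)/n) ≠ 0 := by linarith
  rw [pow_sub₀ _ hne (by omega)]
  simp [div_eq_mul_inv]

lemma lemA (k t : ℕ) :
    Tendsto (fun n : ℕ => (n.choose t : ℝ) * ((k:ℝ)/n)^t * (1 - (k:ℝ)/n)^(n-t)) atTop
      (𝓝 ((k:ℝ)^t / t.factorial * Real.exp (-(k:ℝ)))) := by
  have h := ((lemA1 t).mul_const ((k:ℝ)^t)).mul (lemA2 k t)
  have heq : (1 / (t.factorial:ℝ)) * (k:ℝ)^t * Real.exp (-(k:ℝ))
      = (k:ℝ)^t / t.factorial * Real.exp (-(k:ℝ)) := by ring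
  rw [heq] at h
  refine h.congr fun n => ?_
  rw [div_pow]
  ring

lemma tele (x : ℝ) (m : ℕ) :
    ∑ t ∈ range (m+1), (x - t) * x^t / t.factorial = x^(m+1) / m.factorial := by
  have hterm : ∀ t, t ∈ range (m+1) →
      (x - t) * x^t / t.factorial
        = x^(t+1) / t.factorial - (t:ℝ) * x^t / t.factorial := by
    intro t _; ring
  rw [Finset.sum_congr rfl hterm, Finset.sum_sub_distrib]
  have hshift : ∑ t ∈ range (m+1), (t:ℝ) * x^t / t.factorial
      = ∑ t ∈ range m, x^(t+1) / t.factorial := by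
    rw [Finset.sum_range_succ']
    simp only [Nat.cast_zero, zero_mul, zero_div, add_zero]
    refine Finset.sum_congr rfl fun i _ => ?_
    rw [Nat.factorial_succ]
    have h0 : (i.factorial : ℝ) ≠ 0 := by exact_mod_cast i.factorial_ne_zero
    push_cast
    field_simp
  rw [hshift, Finset.sum_range_succ]
  ring

lemma sum_eq (k : ℕ) (hk : 1 ≤ k) :
    ∑ t ∈ range k, ((k - t : ℕ):ℝ) * ((k:ℝ)^t / t.factorial)
      = (k:ℝ)^(k+1) / k.factorial := by
  obtain ⟨m, rfl⟩ : ∃ m, k = m + 1 := ⟨k - 1, by omega⟩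
  have hcast : ∀ t, t ∈ range (m+1) →
      ((m + 1 - t : ℕ):ℝ) * (((m+1:ℕ):ℝ)^t / t.factorial)
        = (((m+1:ℕ):ℝ) - t) * ((m+1:ℕ):ℝ)^t / t.factorial := by
    intro t ht
    rw [Nat.cast_sub (le_of_lt (mem_range.1 ht))]
    ring
  rw [Finset.sum_congr rfl hcast, tele]
  rw [Nat.factorial_succ]
  have h0 : (m.factorial : ℝ) ≠ 0 := by exact_mod_cast m.factorial_ne_zero
  have hm1 : ((m:ℝ) + 1) ≠ 0 := by positivity
  push_cast
  field_simp
  ring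

/-- `Phi n k` is the expectation of `min(X, k)` for `X ~ Binomial(n, k/n)`. -/
noncomputable def Phi (n k : ℕ) : ℝ :=
  ∑ t ∈ Finset.range (n + 1),
    (n.choose t : ℝ) * ((k : ℝ) / n) ^ t * (1 - (k : ℝ) / n) ^ (n - t) * (min t k : ℕ)

lemma phi_eq (k n : ℕ) (hn : k ≤ n) :
    Phi n k = (k:ℝ) - ∑ t ∈ range k,
      ((n.choose t : ℝ) * ((k:ℝ)/n)^t * (1 - (k:ℝ)/n)^(n-t)) * ((k - t : ℕ):ℝ) := by
  have hmin : ∀ t : ℕ, ((min t k : ℕ):ℝ) = (k:ℝ) - ((k - t : ℕ):ℝ) := by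
    intro t
    rcases le_total t k with h | h
    · rw [min_eq_left h, Nat.cast_sub h]; ring
    · rw [min_eq_right h, Nat.sub_eq_zero_of_le h]; simp
  have hsum : ∑ t ∈ range (n+1),
      (n.choose t : ℝ) * ((k:ℝ)/n)^t * (1 - (k:ℝ)/n)^(n-t) = 1 := by
    have h := add_pow ((k:ℝ)/n) (1 - (k:ℝ)/n) n
    have h1 : (k:ℝ)/n + (1 - (k:ℝ)/n) = 1 := by ring
    rw [h1, one_pow] at h
    exact (Finset.sum_congr rfl fun t _ => by ring).trans h.symm
  have htrunc : ∑ t ∈ range (n+1),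
        ((n.choose t : ℝ) * ((k:ℝ)/n)^t * (1 - (k:ℝ)/n)^(n-t)) * ((k - t : ℕ):ℝ)
      = ∑ t ∈ range k,
        ((n.choose t : ℝ) * ((k:ℝ)/n)^t * (1 - (k:ℝ)/n)^(n-t)) * ((k - t : ℕ):ℝ) := by
    symm
    refine Finset.sum_subset (Finset.range_subset_range.2 (by omega)) ?_
    intro t _ htk
    have hkt : k - t = 0 := Nat.sub_eq_zero_of_le (by simpa using Finset.mem_range.not.mp htk)
    rw [hkt]
    simp
  unfold Phi
  calc ∑ t ∈ range (n+1), (n.choose t : ℝ) * ((k:ℝ)/n)^t * (1 - (k:ℝ)/n)^(n-t) * ((min t k : ℕ):ℝ)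
      = ∑ t ∈ range (n+1), ((n.choose t : ℝ) * ((k:ℝ)/n)^t * (1 - (k:ℝ)/n)^(n-t) * k
        - ((n.choose t : ℝ) * ((k:ℝ)/n)^t * (1 - (k:ℝ)/n)^(n-t)) * ((k - t : ℕ):ℝ)) := by
        refine Finset.sum_congr rfl fun t _ => ?_
        rw [hmin t]; ring
    _ = (∑ t ∈ range (n+1), (n.choose t : ℝ) * ((k:ℝ)/n)^t * (1 - (k:ℝ)/n)^(n-t)) * k
        - ∑ t ∈ range (n+1), ((n.choose t : ℝ) * ((k:ℝ)/n)^t * (1 - (k:ℝ)/n)^(n-t)) * ((k - t : ℕ):ℝ) := by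
        rw [Finset.sum_sub_distrib, Finset.sum_mul]
    _ = (k:ℝ) - ∑ t ∈ range k,
        ((n.choose t : ℝ) * ((k:ℝ)/n)^t * (1 - (k:ℝ)/n)^(n-t)) * ((k - t : ℕ):ℝ) := by
        rw [hsum, htrunc, one_mul]

theorem phi_tendsto (k : ℕ) (hk : 1 ≤ k) :
    Filter.Tendsto (fun n => Phi n k) Filter.atTop
      (nhds ((k : ℝ) * (1 - (k : ℝ) ^ k / (Real.exp k * (k.factorial : ℝ))))) := by
  have hlim : Tendsto (fun n : ℕ => (k:ℝ) - ∑ t ∈ range k,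
      ((n.choose t : ℝ) * ((k:ℝ)/n)^t * (1 - (k:ℝ)/n)^(n-t)) * ((k - t : ℕ):ℝ)) atTop
      (𝓝 ((k:ℝ) - ∑ t ∈ range k,
        ((k:ℝ)^t / t.factorial * Real.exp (-(k:ℝ))) * ((k - t : ℕ):ℝ))) :=
    tendsto_const_nhds.sub (tendsto_finset_sum _ fun t _ => (lemA k t).mul_const _)
  have heq : (k:ℝ) - ∑ t ∈ range k,
      ((k:ℝ)^t / t.factorial * Real.exp (-(k:ℝ))) * ((k - t : ℕ):ℝ)
      = (k : ℝ) * (1 - (k : ℝ) ^ k / (Real.exp k * (k.factorial : ℝ))) := by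
    have h1 : ∑ t ∈ range k, ((k:ℝ)^t / t.factorial * Real.exp (-(k:ℝ))) * ((k - t : ℕ):ℝ)
        = Real.exp (-(k:ℝ)) * ∑ t ∈ range k, ((k - t : ℕ):ℝ) * ((k:ℝ)^t / t.factorial) := by
      rw [Finset.mul_sum]
      exact Finset.sum_congr rfl fun t _ => by ring
    rw [h1, sum_eq k hk, Real.exp_neg]
    have he : Real.exp (k:ℝ) ≠ 0 := Real.exp_ne_zero _
    have hf : (k.factorial : ℝ) ≠ 0 := by exact_mod_cast k.factorial_ne_zero
    field_simp
    ring
  rw [heq] at hlim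
  refine hlim.congr' ?_
  filter_upwards [eventually_ge_atTop k] with n hn
  exact (phi_eq k n hn).symm
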